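/- arXiv:1101.1348 — 2 statements merged into one kernel-verified Lean document; each statement's English description precedes it below -/
import Mathlib

section
/- If a homeomorphism f of a compact metric space has only finitely many chain components, then every chain component is locally maximal (isolated): it has a compact neighborhood U such that the chain component equals the intersection over n ∈ ℤ of f^n(U). -/
open Metric Set

/-- `x ⇝ y`: for every `δ > 0` there is a finite `δ`-pseudo-orbit from `x` to `y`. -/
def ChainReach {M : Type*} [MetricSpace M] (f : M ≃ M) (x y : M) : Prop :=
  ∀ δ > (0 : ℝ), ∃ n : ℕ, 1 ≤ n ∧ ∃ c : ℕ → M, c 0 = x ∧ c n = y ∧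
    ∀ i < n, dist (f (c i)) (c (i + 1)) < δ

/-- `x ↭ y` iff `x ⇝ y` and `y ⇝ x`. -/
def ChainBiReach {M : Type*} [MetricSpace M] (f : M ≃ M) (x y : M) : Prop :=
  ChainReach f x y ∧ ChainReach f y x

/-- The chain recurrent set `R(f)`. -/
def ChainRecurrentSet {M : Type*} [MetricSpace M] (f : M ≃ M) : Set M :=
  {x | ChainReach f x x}

/-- The chain component of a point `p ∈ R(f)`. -/
def ChainComponent {M : Type*} [MetricSpace M] (f : M ≃ M) (p : M) : Set M :=
  {x | x ∈ ChainRecurrentSet f ∧ ChainBiReach f p x}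

/-- A single finite `δ`-pseudo-orbit from `x` to `y`. -/
def PChain {M : Type*} [MetricSpace M] (f : M ≃ M) (δ : ℝ) (x y : M) : Prop :=
  ∃ n : ℕ, 1 ≤ n ∧ ∃ c : ℕ → M, c 0 = x ∧ c n = y ∧
    ∀ i < n, dist (f (c i)) (c (i + 1)) < δ

section Lemmas

variable {M : Type*} [MetricSpace M] (f : M ≃ M)

lemma exists_mod [CompactSpace M] {g : M → M} (hg : Continuous g) {δ : ℝ} (hδ : 0 < δ) :
    ∃ η > 0, ∀ a b : M, dist a b < η → dist (g a) (g b) < δ := by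
  have h := CompactSpace.uniformContinuous_of_continuous hg
  rw [Metric.uniformContinuous_iff] at h
  obtain ⟨η, hη, h⟩ := h δ hδ
  exact ⟨η, hη, fun a b hab => h hab⟩

lemma pChain_trans {δ : ℝ} {x y z : M} (h1 : PChain f δ x y) (h2 : PChain f δ y z) :
    PChain f δ x z := by
  obtain ⟨n, hn, c, hc0, hcn, hc⟩ := h1
  obtain ⟨m, hm, d, hd0, hdm, hd⟩ := h2
  refine ⟨n + m, by omega, fun i => if i < n then c i else d (i - n), ?_, ?_, ?_⟩
  · dsimp only; rw [if_pos (by omega)]; exact hc0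
  · dsimp only; rw [if_neg (by omega), Nat.add_sub_cancel_left]; exact hdm
  · intro i hi
    dsimp only
    by_cases h1 : i < n
    · rw [if_pos h1]
      by_cases h2 : i + 1 < n
      · rw [if_pos h2]; exact hc i h1
      · rw [if_neg h2, show i + 1 - n = 0 by omega, hd0, ← hcn,
          show n = i + 1 by omega]
        exact hc i h1
    · rw [if_neg h1, if_neg (by omega), show i + 1 - n = (i - n) + 1 by omega]
      exact hd (i - n) (by omega)

lemma chainReach_trans {x y z : M} (h1 : ChainReach f x y) (h2 : ChainReach f y z) :
    ChainReach f x z :=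
  fun δ hδ => pChain_trans f (h1 δ hδ) (h2 δ hδ)

lemma pChain_orbit {δ : ℝ} (hδ : 0 < δ) {n : ℕ} (hn : 1 ≤ n) (w : M) :
    PChain f δ w ((f ^ n) w) := by
  refine ⟨n, hn, fun i => (f ^ i) w, by simp, rfl, fun i hi => ?_⟩
  have h : (f ^ (i + 1)) w = f ((f ^ i) w) := by rw [pow_succ']; rfl
  simpa [h] using hδ

/-- Perturbation of the two endpoints of a pseudo-orbit. -/
lemma pChain_perturb [CompactSpace M] (hf : Continuous f) {δ : ℝ} (hδ : 0 < δ) :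
    ∃ ε > 0, ε ≤ δ ∧ ∀ x' y' x y : M, dist x' x < ε → dist y' y < ε →
      PChain f ε x y → PChain f δ x' y' := by
  obtain ⟨η, hη, hmod⟩ := exists_mod hf (show (0:ℝ) < δ/3 by linarith)
  refine ⟨min η (δ/3), by positivity, (min_le_right _ _).trans (by linarith), ?_⟩
  rintro x' y' x y hx hy ⟨n, hn, c, hc0, hcn, hc⟩
  have hεη : min η (δ/3) ≤ η := min_le_left _ _
  have hεδ : min η (δ/3) ≤ δ/3 := min_le_right _ _
  have hfx : dist (f x') (f x) < δ/3 := hmod _ _ (lt_of_lt_of_le hx hεη)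
  refine ⟨n, hn, fun i => if i = 0 then x' else if i = n then y' else c i, by simp, ?_, ?_⟩
  · dsimp only; rw [if_neg (by omega), if_pos rfl]
  · intro i hi
    dsimp only
    by_cases h0 : i = 0
    · subst h0
      rw [if_pos rfl]
      simp only [Nat.zero_add]
      have h2 : dist (f x) (c 1) < δ/3 := by
        have := hc 0 hi; rw [hc0] at this; exact lt_of_lt_of_le this hεδ
      by_cases h1 : 1 = n
      · rw [if_neg one_ne_zero, if_pos h1]
        have hc1 : c 1 = y := by rw [h1, hcn]
        have hd1 : dist (c 1) y' < δ/3 := by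
          rw [hc1, dist_comm]; exact lt_of_lt_of_le hy hεδ
        have t := dist_triangle4 (f x') (f x) (c 1) y'
        linarith
      · rw [if_neg one_ne_zero, if_neg h1]
        have t := dist_triangle (f x') (f x) (c 1)
        linarith
    · rw [if_neg h0, if_neg (show ¬ i = n by omega)]
      have h2 : dist (f (c i)) (c (i + 1)) < δ/3 := lt_of_lt_of_le (hc i hi) hεδ
      by_cases h1 : i + 1 = n
      · rw [if_neg (by omega), if_pos h1]
        have hd1 : dist (c (i + 1)) y' < δ/3 := by
          rw [h1, hcn, dist_comm]; exact lt_of_lt_of_le hy hεδ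
        have t := dist_triangle (f (c i)) (c (i + 1)) y'
        linarith
      · rw [if_neg (by omega), if_neg h1]
        linarith

lemma chainReach_apply_self (x : M) : ChainReach f x (f x) := by
  intro δ hδ
  have h := pChain_orbit f hδ (le_refl 1) x
  simpa [pow_one, PChain] using h

lemma chainReach_symm_apply (x : M) : ChainReach f (f.symm x) x := by
  intro δ hδ
  have h := pChain_orbit f hδ (le_refl 1) (f.symm x)
  simpa [pow_one, PChain] using h

lemma chainReach_closure [CompactSpace M] (hf : Continuous f) {x y : M}
    (h : ∀ ε > (0:ℝ), ∃ a b : M, dist x a < ε ∧ dist y b < ε ∧ ChainReach f a b) :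
    ChainReach f x y := by
  intro δ hδ
  obtain ⟨ε, hε, hεδ, key⟩ := pChain_perturb f hf hδ
  obtain ⟨a, b, ha, hb, hab⟩ := h ε hε
  exact key x y a b ha hb (hab ε hε)

lemma chainReach_shift [CompactSpace M] (hf : Continuous f) {x : M}
    (h : ChainReach f x x) : ChainReach f (f x) x := by
  intro δ hδ
  obtain ⟨ε, hε, hεδ, key⟩ := pChain_perturb f hf hδ
  obtain ⟨n, hn, c, hc0, hcn, hc⟩ := h ε hε
  have h1 : dist (f x) (c 1) < ε := by
    have := hc 0 (by omega); rwa [hc0] at this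
  have B : PChain f ε (c 1) x := by
    rcases Nat.lt_or_ge 1 n with h2 | h2
    · exact ⟨n - 1, by omega, fun i => c (i + 1), rfl,
        by dsimp only; rw [show n - 1 + 1 = n by omega, hcn],
        fun i hi => hc (i + 1) (by omega)⟩
    · have hc1 : c 1 = x := by rw [show (1:ℕ) = n by omega, hcn]
      rw [hc1]
      exact ⟨n, hn, c, hc0, hcn, hc⟩
  exact key (f x) x (c 1) x h1 (by simpa using hε) B

lemma chainReach_conj [CompactSpace M] (g : M ≃ M) (hg : Continuous g)
    (hcomm : ∀ a, g (f a) = f (g a)) {x y : M} (h : ChainReach f x y) :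
    ChainReach f (g x) (g y) := by
  intro δ hδ
  obtain ⟨η, hη, hmod⟩ := exists_mod hg hδ
  obtain ⟨n, hn, c, hc0, hcn, hc⟩ := h η hη
  exact ⟨n, hn, fun i => g (c i), by dsimp only; rw [hc0], by dsimp only; rw [hcn],
    fun i hi => by dsimp only; rw [← hcomm]; exact hmod _ _ (hc i hi)⟩

lemma isClosed_chainComponent [CompactSpace M] (hf : Continuous f) (p : M) :
    IsClosed (ChainComponent f p) := by
  rw [← closure_subset_iff_isClosed]
  intro x hx
  rw [Metric.mem_closure_iff] at hx
  have h1 : ChainReach f p x := by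
    apply chainReach_closure f hf
    intro ε hε
    obtain ⟨b, hb, hxb⟩ := hx ε hε
    exact ⟨p, b, by simpa using hε, hxb, hb.2.1⟩
  have h2 : ChainReach f x p := by
    apply chainReach_closure f hf
    intro ε hε
    obtain ⟨b, hb, hxb⟩ := hx ε hε
    exact ⟨b, p, hxb, by simpa using hε, hb.2.2⟩
  exact ⟨chainReach_trans f h2 h1, h1, h2⟩

lemma chainComponent_eq {p q r : M} (hq : r ∈ ChainComponent f q)
    (hp : r ∈ ChainComponent f p) : ChainComponent f q = ChainComponent f p := by
  obtain ⟨-, hq1, hq2⟩ := hq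
  obtain ⟨-, hp1, hp2⟩ := hp
  ext s
  constructor
  · rintro ⟨hs, h1, h2⟩
    exact ⟨hs, chainReach_trans f hp1 (chainReach_trans f hq2 h1),
      chainReach_trans f h2 (chainReach_trans f hq1 hp2)⟩
  · rintro ⟨hs, h1, h2⟩
    exact ⟨hs, chainReach_trans f hq1 (chainReach_trans f hp2 h1),
      chainReach_trans f h2 (chainReach_trans f hp1 hq2)⟩

lemma orbit_shift (x : M) (k : ℤ) (m : ℕ) :
    (f ^ m) ((f ^ k) x) = (f ^ (k + m)) x := by
  simp [← zpow_natCast, ← Equiv.Perm.mul_apply, ← zpow_add, add_comm]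

lemma chainComponent_invariant [CompactSpace M] (hf : Continuous f)
    (hf' : Continuous f.symm) (p : M) {x : M} (hx : x ∈ ChainComponent f p) :
    f x ∈ ChainComponent f p ∧ f.symm x ∈ ChainComponent f p := by
  obtain ⟨hxR, hpx, hxp⟩ := hx
  have hfx_x : ChainReach f (f x) x := chainReach_shift f hf hxR
  have hx_fx : ChainReach f x (f x) := chainReach_apply_self f x
  have hsx_x : ChainReach f (f.symm x) x := chainReach_symm_apply f x
  have hx_sx : ChainReach f x (f.symm x) := by
    have h := chainReach_conj f f.symm hf' (fun a => by simp) hfx_x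
    simpa using h
  exact ⟨⟨chainReach_trans f hfx_x hx_fx, chainReach_trans f hpx hx_fx,
      chainReach_trans f hfx_x hxp⟩,
    ⟨chainReach_trans f hsx_x hx_sx, chainReach_trans f hpx hx_sx,
      chainReach_trans f hsx_x hxp⟩⟩

lemma chainComponent_zpow_invariant [CompactSpace M] (hf : Continuous f)
    (hf' : Continuous f.symm) (p : M) :
    ∀ (n : ℤ), ∀ x ∈ ChainComponent f p, (f ^ n) x ∈ ChainComponent f p := by
  intro n
  induction n using Int.induction_on with
  | zero => intro x hx; simpa using hx
  | succ k ih =>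
      intro x hx
      have h : (f ^ ((k : ℤ) + 1)) x = (f ^ (k : ℤ)) (f x) := by
        rw [zpow_add_one]; rfl
      rw [h]
      exact ih _ (chainComponent_invariant f hf hf' p hx).1
  | pred k ih =>
      intro x hx
      have h : (f ^ (-(k : ℤ) - 1)) x = (f ^ (-(k : ℤ))) (f.symm x) := by
        rw [zpow_sub_one]; rfl
      rw [h]
      exact ih _ (chainComponent_invariant f hf hf' p hx).2

end Lemmas

/-- If a homeomorphism of a compact metric space has only finitely many chain components,
then every chain component is locally maximal (isolated): it has a compact neighborhood `U`
with `C = ⋂_{n ∈ ℤ} f^n(U)`. -/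
theorem chainComponents_finite_implies_locally_maximal
    {M : Type*} [MetricSpace M] [CompactSpace M]
    (f : M ≃ M) (hf : Continuous f) (hf' : Continuous f.symm)
    (hfin : {C : Set M | ∃ p ∈ ChainRecurrentSet f, C = ChainComponent f p}.Finite) :
    ∀ p ∈ ChainRecurrentSet f, ∃ U : Set M, IsCompact U ∧
      ChainComponent f p ⊆ interior U ∧
      ChainComponent f p = ⋂ n : ℤ, (f ^ n) '' U := by
  classical
  intro p hp
  set C := ChainComponent f p with hCdef
  have hpC : p ∈ C := ⟨hp, hp, hp⟩
  have hCclosed : IsClosed C := isClosed_chainComponent f hf p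
  set D := ⋃ C' ∈ {C' ∈ {C' : Set M | ∃ q ∈ ChainRecurrentSet f, C' = ChainComponent f q} | C' ≠ C}, C' with hDdef
  have hDclosed : IsClosed D := by
    apply Set.Finite.isClosed_biUnion (hfin.subset (Set.sep_subset _ _))
    rintro C' ⟨⟨q, hq, rfl⟩, -⟩
    exact isClosed_chainComponent f hf q
  have hDC : ∀ b ∈ D, b ∉ C := by
    rintro b hb hbC
    simp only [hDdef, Set.mem_iUnion] at hb
    obtain ⟨C', ⟨⟨q, hq, rfl⟩, hne⟩, hbC'⟩ := hb
    exact hne (chainComponent_eq f hbC' hbC)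
  have hRD : ∀ r ∈ ChainRecurrentSet f, r ∉ C → r ∈ D := by
    intro r hr hrC
    have hrr : r ∈ ChainComponent f r := ⟨hr, hr, hr⟩
    refine Set.mem_biUnion ⟨⟨r, hr, rfl⟩, fun h => hrC (h ▸ hrr)⟩ hrr
  obtain ⟨ε, hε, hsep⟩ : ∃ ε > (0:ℝ), ∀ b ∈ D, ε ≤ infDist b C := by
    rcases Set.eq_empty_or_nonempty D with h | h
    · exact ⟨1, one_pos, by simp [h]⟩
    · obtain ⟨b₀, hb₀, hmin⟩ :=
        hDclosed.isCompact.exists_isMinOn h (continuous_infDist_pt C).continuousOn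
      refine ⟨infDist b₀ C, ?_, fun b hb => hmin hb⟩
      exact (hCclosed.notMem_iff_infDist_pos ⟨p, hpC⟩).1 (hDC b₀ hb₀)
  set U := {q : M | infDist q C ≤ ε/2} with hUdef
  have hUclosed : IsClosed U := isClosed_le (continuous_infDist_pt C) continuous_const
  have hUcpt : IsCompact U := hUclosed.isCompact
  have hCU : C ⊆ U := fun q hq => by
    simp only [hUdef, Set.mem_setOf_eq, infDist_zero_of_mem hq]; positivity
  have hCint : C ⊆ interior U := by
    have hsub : C ⊆ {q : M | infDist q C < ε/2} := fun q hq => by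
      simp only [Set.mem_setOf_eq, infDist_zero_of_mem hq]; positivity
    have hsub2 : {q : M | infDist q C < ε/2} ⊆ interior U := by
      refine interior_maximal (fun q hq => ?_)
        (isOpen_lt (continuous_infDist_pt C) continuous_const)
      rw [hUdef]
      simp only [Set.mem_setOf_eq] at hq ⊢
      exact hq.le
    exact hsub.trans hsub2
  have hRU : ∀ r ∈ ChainRecurrentSet f, r ∈ U → r ∈ C := by
    intro r hr hrU
    by_contra hrC
    have h1 := hsep r (hRD r hr hrC)
    have h2 : infDist r C ≤ ε/2 := by rw [hUdef] at hrU; exact hrU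
    linarith
  have hinv := chainComponent_zpow_invariant f hf hf' p
  refine ⟨U, hUcpt, hCint, subset_antisymm ?_ ?_⟩
  · intro x hx
    refine Set.mem_iInter.2 fun n => ⟨(f ^ (-n)) x, hCU (hinv (-n) x hx), ?_⟩
    rw [← Equiv.Perm.mul_apply, ← zpow_add, add_neg_cancel, zpow_zero, Equiv.Perm.one_apply]
  · intro x hx
    rw [Set.mem_iInter] at hx
    have horb : ∀ k : ℤ, (f ^ k) x ∈ U := by
      intro k
      obtain ⟨u, hu, huu⟩ := hx (-k)
      have h : (f ^ k) x = u := by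
        rw [← huu, ← Equiv.Perm.mul_apply, ← zpow_add, add_neg_cancel, zpow_zero, Equiv.Perm.one_apply]
      rwa [h]
    obtain ⟨y, φ, hφ, hty⟩ := CompactSpace.tendsto_subseq
      (fun n : ℕ => (f ^ ((n : ℤ) + 1)) x)
    obtain ⟨z, ψ, hψ, htz⟩ := CompactSpace.tendsto_subseq
      (fun n : ℕ => (f ^ (-((n : ℤ) + 1))) x)
    have hyU : y ∈ U := hUclosed.mem_of_tendsto hty
      (Filter.Eventually.of_forall fun n => horb _)
    have hzU : z ∈ U := hUclosed.mem_of_tendsto htz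
      (Filter.Eventually.of_forall fun n => horb _)
    rw [Metric.tendsto_atTop] at hty htz
    -- x ⇝ y
    have hxy : ChainReach f x y := by
      intro δ hδ
      obtain ⟨ε', hε', hεδ', key⟩ := pChain_perturb f hf hδ
      obtain ⟨K, hK⟩ := hty ε' hε'
      have h1 : dist ((f ^ ((φ K : ℤ) + 1)) x) y < ε' := hK K le_rfl
      have h2 : ((f ^ (φ K + 1) : M ≃ M)) x = (f ^ ((φ K : ℤ) + 1)) x := by
        rw [← zpow_natCast]; push_cast; ring_nf
      refine key x y x ((f ^ (φ K + 1)) x) (by simpa using hε') ?_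
        (pChain_orbit f hε' (by omega) x)
      rw [h2, dist_comm]; exact h1
    -- y ⇝ y
    have hyy : ChainReach f y y := by
      intro δ hδ
      obtain ⟨ε', hε', hεδ', key⟩ := pChain_perturb f hf hδ
      obtain ⟨K, hK⟩ := hty ε' hε'
      set a := φ K with ha
      set b := φ (K + 1) with hb
      have hab : a < b := hφ (Nat.lt_succ_self K)
      have hda : dist ((f ^ ((a : ℤ) + 1)) x) y < ε' := hK K le_rfl
      have hdb : dist ((f ^ ((b : ℤ) + 1)) x) y < ε' := hK (K + 1) (by omega)
      set w := (f ^ ((a : ℤ) + 1)) x with hw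
      have hshift : (f ^ (b - a)) w = (f ^ ((b : ℤ) + 1)) x := by
        rw [hw, orbit_shift]
        congr 1
        push_cast [Nat.cast_sub hab.le]
        ring
      refine key y y w ((f ^ (b - a)) w) (by rw [dist_comm]; exact hda) ?_
        (pChain_orbit f hε' (by omega) w)
      rw [dist_comm, hshift]; exact hdb
    -- z ⇝ z
    have hzz : ChainReach f z z := by
      intro δ hδ
      obtain ⟨ε', hε', hεδ', key⟩ := pChain_perturb f hf hδ
      obtain ⟨K, hK⟩ := htz ε' hε'
      set a := ψ K with ha
      set b := ψ (K + 1) with hb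
      have hab : a < b := hψ (Nat.lt_succ_self K)
      have hda : dist ((f ^ (-((a : ℤ) + 1))) x) z < ε' := hK K le_rfl
      have hdb : dist ((f ^ (-((b : ℤ) + 1))) x) z < ε' := hK (K + 1) (by omega)
      set w := (f ^ (-((b : ℤ) + 1))) x with hw
      have hshift : (f ^ (b - a)) w = (f ^ (-((a : ℤ) + 1))) x := by
        rw [hw, orbit_shift]
        congr 1
        push_cast [Nat.cast_sub hab.le]
        ring
      refine key z z w ((f ^ (b - a)) w) (by rw [dist_comm]; exact hdb) ?_
        (pChain_orbit f hε' (by omega) w)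
      rw [dist_comm, hshift]; exact hda
    -- z ⇝ x
    have hzx : ChainReach f z x := by
      intro δ hδ
      obtain ⟨ε', hε', hεδ', key⟩ := pChain_perturb f hf hδ
      obtain ⟨K, hK⟩ := htz ε' hε'
      have hda : dist ((f ^ (-((ψ K : ℤ) + 1))) x) z < ε' := hK K le_rfl
      set w := (f ^ (-((ψ K : ℤ) + 1))) x with hw
      have hshift : (f ^ (ψ K + 1)) w = x := by
        rw [hw, orbit_shift]
        have : -((ψ K : ℤ) + 1) + ((ψ K + 1 : ℕ) : ℤ) = 0 := by push_cast; ring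
        rw [this, zpow_zero]; rfl
      refine key z x w ((f ^ (ψ K + 1)) w) (by rw [dist_comm]; exact hda) ?_
        (pChain_orbit f hε' (by omega) w)
      rw [hshift]; simpa using hε'
    have hyC : y ∈ C := hRU y hyy hyU
    have hzC : z ∈ C := hRU z hzz hzU
    have hpx : ChainReach f p x := chainReach_trans f hzC.2.1 hzx
    have hxp : ChainReach f x p := chainReach_trans f hxy hyC.2.2
    exact ⟨chainReach_trans f hxp hpx, hpx, hxp⟩
end

section
/- Let p and q be hyperbolic fixed points of a diffeomorphism f with q in the homoclinic class H_f(p), and suppose f restricted to H_f(p) has the shadowing property. Then W^s(p) ∩ W^u(q) ≠ ∅ and W^u(p) ∩ W^s(q) ≠ ∅. -/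
open Filter

variable {E : Type*} [NormedAddCommGroup E] [NormedSpace ℝ E]

/-- Stable set of a periodic point `p` of period `k`: `f^{kn}(x) → p`. -/
def Ws (f : E ≃ E) (k : ℕ) (p : E) : Set E :=
  {x | Tendsto (fun n : ℕ => f^[k * n] x) atTop (nhds p)}

/-- Unstable set of a periodic point `p` of period `k`: `f^{-kn}(x) → p`. -/
def Wu (f : E ≃ E) (k : ℕ) (p : E) : Set E :=
  {x | Tendsto (fun n : ℕ => (f.symm : E → E)^[k * n] x) atTop (nhds p)}

/-- Points where the sets `A` and `B` intersect transversally (the tangent cones span). -/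
def TransversePts (A B : Set E) : Set E :=
  {x | x ∈ A ∩ B ∧
    Submodule.span ℝ (tangentConeAt ℝ A x) ⊔ Submodule.span ℝ (tangentConeAt ℝ B x) = ⊤}

/-- `p` is a hyperbolic fixed point of the diffeomorphism `f`. -/
def IsHyperbolicFixedPoint (f : E ≃ E) (p : E) : Prop :=
  f p = p ∧
  ∃ Es Eu : Submodule ℝ E, IsCompl Es Eu ∧
    Es.map (fderiv ℝ f p : E →ₗ[ℝ] E) = Es ∧ Eu.map (fderiv ℝ f p : E →ₗ[ℝ] E) = Eu ∧
    ∃ C > (0 : ℝ), ∃ lam : ℝ, 0 < lam ∧ lam < 1 ∧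
      (∀ n : ℕ, ∀ v ∈ Es, ‖((fderiv ℝ f p) ^ n) v‖ ≤ C * lam ^ n * ‖v‖) ∧
      (∀ n : ℕ, ∀ v ∈ Eu, ‖v‖ ≤ C * lam ^ n * ‖((fderiv ℝ f p) ^ n) v‖)

/-- `q'` (periodic of period `k'`) is homoclinically related to the fixed point `p`. -/
def RelatedToFixed (f : E ≃ E) (p q' : E) (k' : ℕ) : Prop :=
  (TransversePts (Ws f 1 p) (Wu f k' q')).Nonempty ∧
  (TransversePts (Wu f 1 p) (Ws f k' q')).Nonempty

section Auxiliary

set_option linter.unusedSectionVars false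
set_option maxHeartbeats 1000000

lemma perm_pow_apply (f : E ≃ E) (n : ℕ) (y : E) : (f ^ (n : ℤ)) y = (f : E → E)^[n] y := by
  rw [zpow_natCast, ← Equiv.Perm.iterate_eq_pow]

lemma perm_pow_neg_apply (f : E ≃ E) (n : ℕ) (y : E) :
    (f ^ (-(n : ℤ))) y = (f.symm : E → E)^[n] y := by
  rw [zpow_neg, zpow_natCast, ← inv_pow, ← Equiv.Perm.iterate_eq_pow]
  have : (f⁻¹ : E ≃ E) = f.symm := rfl
  rw [this]

lemma mem_Ws_iff (f : E ≃ E) (p x : E) :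
    x ∈ Ws f 1 p ↔ Tendsto (fun n : ℕ => (f : E → E)^[n] x) atTop (nhds p) := by
  simp [Ws, one_mul]

lemma mem_Wu_iff (f : E ≃ E) (p x : E) :
    x ∈ Wu f 1 p ↔ Tendsto (fun n : ℕ => (f.symm : E → E)^[n] x) atTop (nhds p) := by
  simp [Wu, one_mul]

lemma Ws_of_shift (f : E ≃ E) (p x : E) (M : ℕ)
    (h : Tendsto (fun n : ℕ => (f : E → E)^[n] ((f : E → E)^[M] x)) atTop (nhds p)) :
    x ∈ Ws f 1 p := by
  rw [mem_Ws_iff]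
  rw [← tendsto_add_atTop_iff_nat M]
  convert h using 2 with n
  rw [Function.iterate_add_apply]

lemma Wu_of_shift (f : E ≃ E) (p x : E) (M : ℕ)
    (h : Tendsto (fun n : ℕ => (f.symm : E → E)^[n] ((f.symm : E → E)^[M] x)) atTop (nhds p)) :
    x ∈ Wu f 1 p := by
  rw [mem_Wu_iff]
  rw [← tendsto_add_atTop_iff_nat M]
  convert h using 2 with n
  rw [Function.iterate_add_apply]

lemma mem_Ws_apply_iff (f : E ≃ E) (p x : E) : f x ∈ Ws f 1 p ↔ x ∈ Ws f 1 p := by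
  have h : (fun n : ℕ => (f : E → E)^[n] (f x)) = fun n : ℕ => (f : E → E)^[n + 1] x :=
    funext fun n => (Function.iterate_succ_apply (f : E → E) n x).symm
  rw [mem_Ws_iff, mem_Ws_iff, h]
  exact tendsto_add_atTop_iff_nat (f := fun n : ℕ => (f : E → E)^[n] x) 1

lemma mem_Wu_apply_iff (f : E ≃ E) (p x : E) : f x ∈ Wu f 1 p ↔ x ∈ Wu f 1 p := by
  have h : (fun n : ℕ => (f.symm : E → E)^[n + 1] (f x)) = fun n : ℕ => (f.symm : E → E)^[n] x := by
    funext n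
    rw [Function.iterate_succ_apply]
    simp
  rw [mem_Wu_iff, mem_Wu_iff,
    ← tendsto_add_atTop_iff_nat (f := fun n : ℕ => (f.symm : E → E)^[n] (f x)) 1, h]

lemma fderiv_equiv_surjective (f : E ≃ E) (hf : Differentiable ℝ (f : E → E))
    (hf' : Differentiable ℝ (f.symm : E → E)) (w : E) :
    Function.Surjective (fderiv ℝ (f : E → E) w) := by
  set u := f w with hu
  have h1 : HasFDerivAt (f.symm : E → E) (fderiv ℝ (f.symm : E → E) u) u :=
    (hf' u).hasFDerivAt
  have h2 : HasFDerivAt (f : E → E) (fderiv ℝ (f : E → E) w) (f.symm u) := by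
    rw [hu, Equiv.symm_apply_apply]
    exact (hf w).hasFDerivAt
  have hcomp : HasFDerivAt ((f : E → E) ∘ (f.symm : E → E))
      ((fderiv ℝ (f : E → E) w).comp (fderiv ℝ (f.symm : E → E) u)) u := h2.comp u h1
  have hid : ((f : E → E) ∘ (f.symm : E → E)) = id := by
    funext z; simp
  rw [hid] at hcomp
  have := hcomp.unique (hasFDerivAt_id u)
  intro z
  refine ⟨fderiv ℝ (f.symm : E → E) u z, ?_⟩
  have := congrArg (fun (L : E →L[ℝ] E) => L z) this
  simpa using this

lemma transversePts_image_subset (g : E ≃ E) (hg : Differentiable ℝ (g : E → E))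
    (hsurj : ∀ w, Function.Surjective (fderiv ℝ (g : E → E) w))
    (A B : Set E) (hA : (g : E → E) '' A ⊆ A) (hB : (g : E → E) '' B ⊆ B) :
    (g : E → E) '' TransversePts A B ⊆ TransversePts A B := by
  rintro _ ⟨w, ⟨⟨hwA, hwB⟩, hsp⟩, rfl⟩
  set L := fderiv ℝ (g : E → E) w with hL
  have key : ∀ S : Set E, (g : E → E) '' S ⊆ S → w ∈ S →
      Submodule.map (L : E →ₗ[ℝ] E) (Submodule.span ℝ (tangentConeAt ℝ S w)) ≤
        Submodule.span ℝ (tangentConeAt ℝ S (g w)) := by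
    intro S hS hwS
    have hmt : Set.MapsTo L (tangentConeAt ℝ S w) (tangentConeAt ℝ ((g : E → E) '' S) (g w)) :=
      ((hg w).hasFDerivAt.hasFDerivWithinAt).mapsTo_tangent_cone
    have h2 : tangentConeAt ℝ ((g : E → E) '' S) (g w) ⊆ tangentConeAt ℝ S (g w) :=
      tangentConeAt_mono hS
    rw [Submodule.map_span]
    refine Submodule.span_mono ?_
    rintro _ ⟨v, hv, rfl⟩
    exact h2 (hmt hv)
  refine ⟨⟨hA ⟨w, hwA, rfl⟩, hB ⟨w, hwB, rfl⟩⟩, ?_⟩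
  have hmaptop : Submodule.map (L : E →ₗ[ℝ] E) ⊤ = ⊤ := by
    rw [Submodule.map_top, LinearMap.range_eq_top]
    exact hsurj w
  refine top_unique ?_
  calc (⊤ : Submodule ℝ E) = Submodule.map (L : E →ₗ[ℝ] E) ⊤ := hmaptop.symm
    _ = Submodule.map (L : E →ₗ[ℝ] E) (Submodule.span ℝ (tangentConeAt ℝ (A : Set E) w) ⊔
          Submodule.span ℝ (tangentConeAt ℝ (B : Set E) w)) := by rw [hsp]
    _ = Submodule.map (L : E →ₗ[ℝ] E) (Submodule.span ℝ (tangentConeAt ℝ (A : Set E) w)) ⊔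
          Submodule.map (L : E →ₗ[ℝ] E) (Submodule.span ℝ (tangentConeAt ℝ (B : Set E) w)) :=
        Submodule.map_sup _ _ _
    _ ≤ _ := sup_le_sup (key A hA hwA) (key B hB hwB)

lemma contDiff_iterate (g : E → E) (hg : ContDiff ℝ 1 g) (n : ℕ) : ContDiff ℝ 1 g^[n] := by
  induction n with
  | zero => simpa using contDiff_id
  | succ k ih => rw [Function.iterate_succ']; exact hg.comp ih

lemma fderiv_iterate_fixed (g : E → E) (hg : ContDiff ℝ 1 g) (p : E) (hfix : g p = p) (n : ℕ) :
    fderiv ℝ g^[n] p = (fderiv ℝ g p) ^ n := by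
  induction n with
  | zero => simp [Function.iterate_zero, fderiv_id]; rfl
  | succ k ih =>
    rw [Function.iterate_succ']
    have h1 : fderiv ℝ (g ∘ g^[k]) p =
        (fderiv ℝ g (g^[k] p)).comp (fderiv ℝ g^[k] p) :=
      fderiv_comp p (hg.differentiable one_ne_zero _) ((contDiff_iterate g hg k).differentiable one_ne_zero p)
    rw [h1, Function.iterate_fixed hfix, ih, pow_succ']
    rfl

lemma trap_lemma [FiniteDimensional ℝ E] (g : E → E) (hg : ContDiff ℝ 1 g) (p : E)
    (hfix : g p = p)
    (Es Eu : Submodule ℝ E) (hc : IsCompl Es Eu)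
    (hAs : ∀ v ∈ Es, fderiv ℝ g p v ∈ Es) (hAu : ∀ v ∈ Eu, fderiv ℝ g p v ∈ Eu)
    (N : ℕ) (hN1 : 1 ≤ N)
    (hs : ∀ v ∈ Es, ‖((fderiv ℝ g p) ^ N) v‖ ≤ (1/4) * ‖v‖)
    (hu : ∀ v ∈ Eu, 4 * ‖v‖ ≤ ‖((fderiv ℝ g p) ^ N) v‖) :
    ∃ r > 0, ∀ x : E, (∀ n : ℕ, dist (g^[n] x) p ≤ r) →
      Tendsto (fun n : ℕ => g^[n] x) atTop (nhds p) := by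
  set A := fderiv ℝ g p with hA
  set G := g^[N] with hGdef
  have hG : ContDiff ℝ 1 G := contDiff_iterate g hg N
  have hGfix : G p = p := Function.iterate_fixed hfix N
  have hDG : fderiv ℝ G p = A ^ N := fderiv_iterate_fixed g hg p hfix N
  -- projections
  set πs : E →L[ℝ] E :=
    LinearMap.toContinuousLinearMap (Es.subtype.comp (Es.projectionOnto Eu hc)) with hπs
  set πu : E →L[ℝ] E :=
    LinearMap.toContinuousLinearMap (Eu.subtype.comp (Eu.projectionOnto Es hc.symm)) with hπu
  have hπs_apply : ∀ z, πs z = (Es.projectionOnto Eu hc z : E) := fun z => rfl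
  have hπu_apply : ∀ z, πu z = (Eu.projectionOnto Es hc.symm z : E) := fun z => rfl
  have hmem_s : ∀ z, πs z ∈ Es := fun z => (Es.projectionOnto Eu hc z).2
  have hmem_u : ∀ z, πu z ∈ Eu := fun z => (Eu.projectionOnto Es hc.symm z).2
  have hsum : ∀ z, πs z + πu z = z := fun z =>
    Submodule.projection_add_projection_eq_self hc z
  have hproj : ∀ a b : E, a ∈ Es → b ∈ Eu → πs (a + b) = a ∧ πu (a + b) = b := by
    intro a b ha hb
    have h1 : (Es.projectionOnto Eu hc) a = ⟨a, ha⟩ :=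
      Submodule.projectionOnto_apply_left hc ⟨a, ha⟩
    have h2 : (Es.projectionOnto Eu hc) b = 0 :=
      Submodule.projectionOnto_apply_of_mem_right hc hb
    have h3 : (Eu.projectionOnto Es hc.symm) a = 0 :=
      Submodule.projectionOnto_apply_of_mem_right hc.symm ha
    have h4 : (Eu.projectionOnto Es hc.symm) b = ⟨b, hb⟩ :=
      Submodule.projectionOnto_apply_left hc.symm ⟨b, hb⟩
    constructor
    · rw [hπs_apply, map_add, h1, h2]; simp
    · rw [hπu_apply, map_add, h3, h4]; simp
  have hcomA : ∀ z, πs (A z) = A (πs z) ∧ πu (A z) = A (πu z) := by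
    intro z
    have hz : A z = A (πs z) + A (πu z) := by
      conv_lhs => rw [← hsum z]
      rw [map_add]
    rw [hz]
    exact hproj _ _ (hAs _ (hmem_s z)) (hAu _ (hmem_u z))
  have hpow_apply : ∀ (k : ℕ) (z : E), (A ^ (k+1)) z = A ((A ^ k) z) := by
    intro k z
    rw [pow_succ']
    rfl
  have hcomN : ∀ z, πs ((A ^ N) z) = (A ^ N) (πs z) ∧ πu ((A ^ N) z) = (A ^ N) (πu z) := by
    have : ∀ (k : ℕ) (z : E), πs ((A ^ k) z) = (A ^ k) (πs z) ∧ πu ((A ^ k) z) = (A ^ k) (πu z) := by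
      intro k
      induction k with
      | zero => intro z; simp
      | succ m ih =>
        intro z
        rw [hpow_apply m z, hpow_apply m (πs z), hpow_apply m (πu z),
          (hcomA _).1, (hcomA _).2, (ih z).1, (ih z).2]
        exact ⟨rfl, rfl⟩
    exact this N
  -- constants
  set Ks := ‖πs‖ with hKs
  set Ku := ‖πu‖ with hKu
  set K := Ks + Ku + 1 with hKdef
  have hKpos : 0 < K := by positivity
  have hKsK : Ks ≤ K := by have := norm_nonneg πu; simp [hKdef]; linarith
  have hKuK : Ku ≤ K := by have := norm_nonneg πs; simp [hKdef]; linarith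
  set κ := 1 / (8 * K) with hκ
  have hκpos : 0 < κ := by positivity
  have hKsκ : Ks * κ ≤ 1/8 := by
    rw [hκ, mul_one_div, div_le_div_iff₀ (by positivity) (by norm_num : (0:ℝ) < 8)]
    nlinarith
  have hKuκ : Ku * κ ≤ 1/8 := by
    rw [hκ, mul_one_div, div_le_div_iff₀ (by positivity) (by norm_num : (0:ℝ) < 8)]
    nlinarith
  -- choice of r
  have hcont : Continuous (fun z => fderiv ℝ G z) := hG.continuous_fderiv one_ne_zero
  have hU : ∃ ε > (0:ℝ), ∀ z, dist z p < ε → ‖fderiv ℝ G z - A ^ N‖ < κ := by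
    have : ContinuousAt (fun z => fderiv ℝ G z) p := hcont.continuousAt
    have h2 := Metric.continuousAt_iff.mp this κ hκpos
    obtain ⟨ε, hε, h3⟩ := h2
    refine ⟨ε, hε, fun z hz => ?_⟩
    have := h3 hz
    rwa [dist_eq_norm, hDG] at this
  obtain ⟨ε, hεpos, hball⟩ := hU
  refine ⟨ε/2, by positivity, ?_⟩
  set r := ε/2 with hr
  have hrpos : 0 < r := by positivity
  intro x hx
  -- Lipschitz-type estimate for the error
  have hLip : ∀ y ∈ Metric.closedBall p r, ‖G y - p - (A ^ N) (y - p)‖ ≤ κ * ‖y - p‖ := by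
    intro y hy
    have hconv : Convex ℝ (Metric.closedBall p r) := convex_closedBall p r
    have hder : ∀ z ∈ Metric.closedBall p r,
        HasFDerivWithinAt (fun w => G w - (A ^ N) w) (fderiv ℝ G z - A ^ N)
          (Metric.closedBall p r) z := by
      intro z _
      exact (((hG.differentiable one_ne_zero z).hasFDerivAt).sub ((A ^ N).hasFDerivAt)).hasFDerivWithinAt
    have hbound : ∀ z ∈ Metric.closedBall p r, ‖fderiv ℝ G z - A ^ N‖ ≤ κ := by
      intro z hz
      have : dist z p < ε := lt_of_le_of_lt (Metric.mem_closedBall.mp hz) (by rw [hr]; linarith)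
      exact (hball z this).le
    have := hconv.norm_image_sub_le_of_norm_hasFDerivWithin_le hder hbound
      (Metric.mem_closedBall_self hrpos.le) hy
    calc ‖G y - p - (A ^ N) (y - p)‖
        = ‖(G y - (A ^ N) y) - (G p - (A ^ N) p)‖ := by
          rw [hGfix, map_sub]; congr 1; abel
      _ ≤ κ * ‖y - p‖ := this
  -- the N-step orbit
  set xs : ℕ → E := fun n => g^[N * n] x with hxs
  have hxmem : ∀ n, xs n ∈ Metric.closedBall p r := fun n => Metric.mem_closedBall.mpr (hx _)
  have hxstep : ∀ n, xs (n + 1) = G (xs n) := by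
    intro n
    rw [hxs]
    simp only
    rw [show N * (n + 1) = N + N * n by ring, Function.iterate_add_apply]
  set z : ℕ → E := fun n => xs n - p with hz
  set sn : ℕ → ℝ := fun n => ‖πs (z n)‖ with hsn
  set un : ℕ → ℝ := fun n => ‖πu (z n)‖ with hun
  have hzn : ∀ n, ‖z n‖ ≤ sn n + un n := by
    intro n
    calc ‖z n‖ = ‖πs (z n) + πu (z n)‖ := by rw [hsum]
      _ ≤ sn n + un n := norm_add_le _ _
  have hzr : ∀ n, ‖z n‖ ≤ r := by
    intro n
    have := hxmem n
    rw [Metric.mem_closedBall, dist_eq_norm] at this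
    exact this
  have herr : ∀ n, ‖z (n+1) - (A ^ N) (z n)‖ ≤ κ * (sn n + un n) := by
    intro n
    have h1 : z (n+1) = G (xs n) - p := by rw [hz]; simp only; rw [hxstep]
    have := hLip (xs n) (hxmem n)
    rw [h1]
    calc ‖G (xs n) - p - (A ^ N) (z n)‖ ≤ κ * ‖z n‖ := this
      _ ≤ κ * (sn n + un n) := by
          exact mul_le_mul_of_nonneg_left (hzn n) hκpos.le
  have hsnn : ∀ n, 0 ≤ sn n := fun n => norm_nonneg _
  have hunn : ∀ n, 0 ≤ un n := fun n => norm_nonneg _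
  -- step inequalities
  have hSstep : ∀ n, sn (n+1) ≤ (3/8) * sn n + (1/8) * un n := by
    intro n
    have hdec : πs (z (n+1)) = (A ^ N) (πs (z n)) + πs (z (n+1) - (A ^ N) (z n)) := by
      rw [← (hcomN (z n)).1, ← map_add]
      congr 1
      abel
    have h1 : ‖(A ^ N) (πs (z n))‖ ≤ (1/4) * sn n := hs _ (hmem_s _)
    have h2 : ‖πs (z (n+1) - (A ^ N) (z n))‖ ≤ Ks * (κ * (sn n + un n)) := by
      calc ‖πs (z (n+1) - (A ^ N) (z n))‖ ≤ Ks * ‖z (n+1) - (A ^ N) (z n)‖ := πs.le_opNorm _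
        _ ≤ Ks * (κ * (sn n + un n)) :=
            mul_le_mul_of_nonneg_left (herr n) (norm_nonneg πs)
    have h3 : Ks * (κ * (sn n + un n)) ≤ (1/8) * (sn n + un n) := by
      rw [← mul_assoc]
      exact mul_le_mul_of_nonneg_right hKsκ (by positivity)
    calc sn (n+1) = ‖πs (z (n+1))‖ := rfl
      _ ≤ ‖(A ^ N) (πs (z n))‖ + ‖πs (z (n+1) - (A ^ N) (z n))‖ := by
          rw [hdec]; exact norm_add_le _ _
      _ ≤ (1/4) * sn n + (1/8) * (sn n + un n) := by linarith
      _ = (3/8) * sn n + (1/8) * un n := by ring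
  have hUstep : ∀ n, 4 * un n - (1/8) * (sn n + un n) ≤ un (n+1) := by
    intro n
    have hdec : πu (z (n+1)) = (A ^ N) (πu (z n)) + πu (z (n+1) - (A ^ N) (z n)) := by
      rw [← (hcomN (z n)).2, ← map_add]
      congr 1
      abel
    have h1 : 4 * un n ≤ ‖(A ^ N) (πu (z n))‖ := hu _ (hmem_u _)
    have h2 : ‖πu (z (n+1) - (A ^ N) (z n))‖ ≤ (1/8) * (sn n + un n) := by
      calc ‖πu (z (n+1) - (A ^ N) (z n))‖ ≤ Ku * ‖z (n+1) - (A ^ N) (z n)‖ := πu.le_opNorm _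
        _ ≤ Ku * (κ * (sn n + un n)) :=
            mul_le_mul_of_nonneg_left (herr n) (norm_nonneg πu)
        _ ≤ (1/8) * (sn n + un n) := by
            rw [← mul_assoc]
            exact mul_le_mul_of_nonneg_right hKuκ (by positivity)
    have h3 : ‖(A ^ N) (πu (z n))‖ - ‖πu (z (n+1) - (A ^ N) (z n))‖ ≤ ‖πu (z (n+1))‖ := by
      rw [hdec]
      have := norm_add_le ((A ^ N) (πu (z n)) + πu (z (n+1) - (A ^ N) (z n)))
        (-(πu (z (n+1) - (A ^ N) (z n))))
      simp only [add_neg_cancel_right, norm_neg] at this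
      linarith
    calc 4 * un n - (1/8) * (sn n + un n)
        ≤ ‖(A ^ N) (πu (z n))‖ - ‖πu (z (n+1) - (A ^ N) (z n))‖ := by linarith
      _ ≤ un (n+1) := h3
  -- cone invariance: u n ≤ s n for all n
  have hcone : ∀ n, un n ≤ sn n := by
    by_contra hcon
    push_neg at hcon
    obtain ⟨m, hm⟩ := hcon
    have hclaim : ∀ k, sn (m+k) < un (m+k) ∧ 2^k * un m ≤ un (m+k) := by
      intro k
      induction k with
      | zero => simpa using hm
      | succ j ih =>
        obtain ⟨ih1, ih2⟩ := ih
        have hsj := hsnn (m+j); have huj := hunn (m+j)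
        have hup : 2 * un (m+j) ≤ un (m+j+1) := by
          have := hUstep (m+j)
          nlinarith
        have hs' : sn (m+j+1) < un (m+j+1) := by
          have := hSstep (m+j)
          have hujpos : 0 < un (m+j) := lt_of_le_of_lt hsj ih1
          nlinarith
        constructor
        · exact hs'
        · show 2^(j+1) * un m ≤ un (m+j+1)
          have hum : 0 ≤ un m := hunn m
          calc 2^(j+1) * un m = 2 * (2^j * un m) := by ring
            _ ≤ 2 * un (m+j) := by nlinarith
            _ ≤ un (m+j+1) := hup
    have humpos : 0 < un m := lt_of_le_of_lt (hsnn m) hm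
    have hbdd : ∀ n, un n ≤ K * r := by
      intro n
      calc un n = ‖πu (z n)‖ := rfl
        _ ≤ Ku * ‖z n‖ := πu.le_opNorm _
        _ ≤ K * r := by
            have := hzr n
            have h0 : (0:ℝ) ≤ ‖z n‖ := norm_nonneg _
            nlinarith
    obtain ⟨k, hk⟩ := pow_unbounded_of_one_lt ((K * r) / un m) (one_lt_two (α := ℝ))
    have : K * r < 2^k * un m := by
      rw [div_lt_iff₀ humpos] at hk
      linarith
    have := (hclaim k).2
    have := hbdd (m + k)
    linarith
  -- geometric decay
  have hhalf : ∀ n, sn (n+1) ≤ (1/2) * sn n := by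
    intro n
    have := hSstep n
    have := hcone n
    linarith
  have hgeo : ∀ n, sn n ≤ (1/2)^n * sn 0 := by
    intro n
    induction n with
    | zero => simp
    | succ j ih =>
      calc sn (j+1) ≤ (1/2) * sn j := hhalf j
        _ ≤ (1/2) * ((1/2)^j * sn 0) := by linarith
        _ = (1/2)^(j+1) * sn 0 := by ring
  have hzbound : ∀ n, ‖z n‖ ≤ (2 * sn 0) * (1/2)^n := by
    intro n
    have h1 := hzn n
    have h2 := hcone n
    have h3 := hgeo n
    nlinarith [hsnn 0]
  have hztend : Tendsto z atTop (nhds 0) := by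
    apply squeeze_zero_norm hzbound
    have h1 : Tendsto (fun n : ℕ => ((1:ℝ)/2)^n) atTop (nhds 0) :=
      tendsto_pow_atTop_nhds_zero_of_lt_one (by norm_num) (by norm_num)
    have := h1.const_mul (2 * sn 0)
    simpa using this
  have hxtend : Tendsto xs atTop (nhds p) := by
    have : Tendsto (fun n => z n + p) atTop (nhds (0 + p)) := hztend.add_const p
    rw [zero_add] at this
    convert this using 2 with n
    rw [hz]
    simp
  -- from the N-step convergence to full convergence
  have hj : ∀ j : ℕ, Tendsto (fun n : ℕ => g^[j + N*n] x) atTop (nhds p) := by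
    intro j
    have hc1 : Continuous g^[j] := (hg.continuous).iterate j
    have h2 : Tendsto (fun n => g^[j] (xs n)) atTop (nhds (g^[j] p)) :=
      (hc1.tendsto p).comp hxtend
    rw [Function.iterate_fixed hfix j] at h2
    convert h2 using 2 with n
    rw [Function.iterate_add_apply]
  rw [Metric.tendsto_atTop]
  intro δ hδ
  have hch : ∀ j, ∃ Mj : ℕ, ∀ n ≥ Mj, dist (g^[j + N*n] x) p < δ := fun j =>
    Metric.tendsto_atTop.mp (hj j) δ hδ
  choose Mf hMf using hch
  set Mm := (Finset.range N).sup Mf with hMm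
  refine ⟨N * (Mm + 1), fun m hm => ?_⟩
  have hN0 : 0 < N := hN1
  have h1 : m % N < N := Nat.mod_lt _ hN0
  have h2 : Mm + 1 ≤ m / N := by
    rw [Nat.le_div_iff_mul_le hN0, Nat.mul_comm]
    exact hm
  have h3 : Mf (m % N) ≤ Mm := Finset.le_sup (Finset.mem_range.mpr h1)
  have h4 := hMf (m % N) (m / N) (by omega)
  have h5 : m % N + N * (m / N) = m := Nat.mod_add_div m N
  rw [h5] at h4
  exact h4

lemma hyp_symm (f : E ≃ E) (hf : ContDiff ℝ 1 (f : E → E)) (hf' : ContDiff ℝ 1 (f.symm : E → E))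
    (p : E) (hp : IsHyperbolicFixedPoint f p) : IsHyperbolicFixedPoint f.symm p := by
  obtain ⟨hfp, Es, Eu, hc, hmapS, hmapU, C, hC, lam, hl0, hl1, hes, heu⟩ := hp
  set A := fderiv ℝ (f : E → E) p with hA
  set B := fderiv ℝ (f.symm : E → E) p with hB
  have hsymmp : (f.symm : E → E) p = p := by
    conv_lhs => rw [← hfp]
    exact f.symm_apply_apply p
  have hAfd : HasFDerivAt (f : E → E) A p := (hf.differentiable one_ne_zero p).hasFDerivAt
  have hBfd : HasFDerivAt (f.symm : E → E) B p := (hf'.differentiable one_ne_zero p).hasFDerivAt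
  have hBA : ∀ v, B (A v) = v := by
    have hBfd' : HasFDerivAt (f.symm : E → E) B (f p) := by rwa [hfp]
    have hcomp : HasFDerivAt ((f.symm : E → E) ∘ (f : E → E)) (B.comp A) p := hBfd'.comp p hAfd
    have hid : ((f.symm : E → E) ∘ (f : E → E)) = id := by funext w; simp
    rw [hid] at hcomp
    have h := hcomp.unique (hasFDerivAt_id p)
    intro v
    have := congrArg (fun (L : E →L[ℝ] E) => L v) h
    simpa using this
  have hAB : ∀ v, A (B v) = v := by
    have hAfd' : HasFDerivAt (f : E → E) A (f.symm p) := by rwa [hsymmp]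
    have hcomp : HasFDerivAt ((f : E → E) ∘ (f.symm : E → E)) (A.comp B) p := hAfd'.comp p hBfd
    have hid : ((f : E → E) ∘ (f.symm : E → E)) = id := by funext w; simp
    rw [hid] at hcomp
    have h := hcomp.unique (hasFDerivAt_id p)
    intro v
    have := congrArg (fun (L : E →L[ℝ] E) => L v) h
    simpa using this
  have hABn : ∀ n : ℕ, ∀ v, (A ^ n) ((B ^ n) v) = v := by
    intro n
    induction n with
    | zero => intro v; simp
    | succ k ih =>
      intro v
      have h1 : (B ^ (k+1)) v = B ((B ^ k) v) := by rw [pow_succ']; rfl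
      have h2 : ∀ w, (A ^ (k+1)) w = (A ^ k) (A w) := by intro w; rw [pow_succ]; rfl
      rw [h1, h2, hAB, ih]
  have hBs : ∀ v ∈ Es, B v ∈ Es := by
    intro v hv
    rw [← hmapS] at hv
    obtain ⟨u, hu, rfl⟩ := hv
    rw [ContinuousLinearMap.coe_coe, hBA]; exact hu
  have hBu : ∀ v ∈ Eu, B v ∈ Eu := by
    intro v hv
    rw [← hmapU] at hv
    obtain ⟨u, hu, rfl⟩ := hv
    rw [ContinuousLinearMap.coe_coe, hBA]; exact hu
  have hBns : ∀ n : ℕ, ∀ v ∈ Es, (B ^ n) v ∈ Es := by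
    intro n
    induction n with
    | zero => intro v hv; simpa using hv
    | succ k ih =>
      intro v hv
      have h1 : (B ^ (k+1)) v = (B ^ k) (B v) := by rw [pow_succ]; rfl
      rw [h1]; exact ih _ (hBs v hv)
  have hBnu : ∀ n : ℕ, ∀ v ∈ Eu, (B ^ n) v ∈ Eu := by
    intro n
    induction n with
    | zero => intro v hv; simpa using hv
    | succ k ih =>
      intro v hv
      have h1 : (B ^ (k+1)) v = (B ^ k) (B v) := by rw [pow_succ]; rfl
      rw [h1]; exact ih _ (hBu v hv)
  refine ⟨hsymmp, Eu, Es, hc.symm, ?_, ?_, C, hC, lam, hl0, hl1, ?_, ?_⟩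
  · apply le_antisymm
    · rintro _ ⟨v, hv, rfl⟩; exact hBu v hv
    · intro v hv
      refine ⟨A v, ?_, hBA v⟩
      rw [← hmapU]
      exact Submodule.mem_map_of_mem hv
  · apply le_antisymm
    · rintro _ ⟨v, hv, rfl⟩; exact hBs v hv
    · intro v hv
      refine ⟨A v, ?_, hBA v⟩
      rw [← hmapS]
      exact Submodule.mem_map_of_mem hv
  · intro n v hv
    have h1 := heu n ((B ^ n) v) (hBnu n v hv)
    rwa [hABn n v] at h1
  · intro n v hv
    have h1 := hes n ((B ^ n) v) (hBns n v hv)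
    rwa [hABn n v] at h1

lemma hyp_to_trap [FiniteDimensional ℝ E] (f : E ≃ E) (hf : ContDiff ℝ 1 (f : E → E)) (p : E)
    (hp : IsHyperbolicFixedPoint f p) :
    ∃ r > 0, ∀ x : E, (∀ n : ℕ, dist ((f : E → E)^[n] x) p ≤ r) →
      Tendsto (fun n : ℕ => (f : E → E)^[n] x) atTop (nhds p) := by
  obtain ⟨hfp, Es, Eu, hc, hmapS, hmapU, C, hC, lam, hl0, hl1, hes, heu⟩ := hp
  have htend : Tendsto (fun n : ℕ => C * lam ^ n) atTop (nhds 0) := by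
    have h1 := tendsto_pow_atTop_nhds_zero_of_lt_one hl0.le hl1
    have h2 := h1.const_mul C
    simpa using h2
  have hev : ∀ᶠ n in atTop, C * lam ^ n < 1/4 :=
    htend.eventually (gt_mem_nhds (by norm_num))
  obtain ⟨N0, hN0⟩ := eventually_atTop.mp hev
  set N := N0 + 1 with hNdef
  have hCl : C * lam ^ N < 1/4 := hN0 N (by omega)
  have hAs : ∀ v ∈ Es, fderiv ℝ (f : E → E) p v ∈ Es := by
    intro v hv
    have : fderiv ℝ (f : E → E) p v ∈ Es.map (fderiv ℝ (f : E → E) p : E →ₗ[ℝ] E) :=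
      Submodule.mem_map_of_mem hv
    rwa [hmapS] at this
  have hAu : ∀ v ∈ Eu, fderiv ℝ (f : E → E) p v ∈ Eu := by
    intro v hv
    have : fderiv ℝ (f : E → E) p v ∈ Eu.map (fderiv ℝ (f : E → E) p : E →ₗ[ℝ] E) :=
      Submodule.mem_map_of_mem hv
    rwa [hmapU] at this
  refine trap_lemma (f : E → E) hf p hfp Es Eu hc hAs hAu N (by omega) ?_ ?_
  · intro v hv
    calc ‖((fderiv ℝ (f : E → E) p) ^ N) v‖ ≤ C * lam ^ N * ‖v‖ := hes N v hv
      _ ≤ (1/4) * ‖v‖ := mul_le_mul_of_nonneg_right hCl.le (norm_nonneg v)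
  · intro v hv
    have h1 := heu N v hv
    have h2 : C * lam ^ N * ‖((fderiv ℝ (f : E → E) p) ^ N) v‖ ≤
        (1/4) * ‖((fderiv ℝ (f : E → E) p) ^ N) v‖ :=
      mul_le_mul_of_nonneg_right hCl.le (norm_nonneg _)
    linarith

end Auxiliary

/-- Let `p, q` be hyperbolic fixed points with `q` in the homoclinic class `H_f(p)`
(the closure of the transverse homoclinic points of `p`, which is assumed to coincide with
the closure of the periodic points homoclinically related to `p`). If `f` has the shadowing
property on `H_f(p)`, then `W^s(p) ∩ W^u(q) ≠ ∅` and `W^u(p) ∩ W^s(q) ≠ ∅`. -/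
theorem stable_unstable_intersect_of_shadowing
    [FiniteDimensional ℝ E]
    (f : E ≃ E) (hf : ContDiff ℝ 1 f) (hf' : ContDiff ℝ 1 f.symm)
    (p q : E) (hp : IsHyperbolicFixedPoint f p) (hq : IsHyperbolicFixedPoint f q)
    (H : Set E) (hHdef : H = closure (TransversePts (Ws f 1 p) (Wu f 1 p)))
    -- Smale: H_f(p) is the closure of the periodic points homoclinically related to p
    (hsmale : H = closure {z | ∃ k' : ℕ, 1 ≤ k' ∧ f^[k'] z = z ∧ RelatedToFixed f p z k'})
    (hqH : q ∈ H)
    -- f has the shadowing property on H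
    (hshadow : ∀ ε > (0 : ℝ), ∃ δ > (0 : ℝ), ∀ x : ℤ → E, (∀ i, x i ∈ H) →
      (∀ i : ℤ, dist (f (x i)) (x (i + 1)) < δ) →
      ∃ y : E, ∀ i : ℤ, dist ((f ^ i) y) (x i) < ε) :
    (Ws f 1 p ∩ Wu f 1 q).Nonempty ∧ (Wu f 1 p ∩ Ws f 1 q).Nonempty := by
  classical
  set T := TransversePts (Ws f 1 p) (Wu f 1 p) with hT
  have hfd : Differentiable ℝ (f : E → E) := hf.differentiable one_ne_zero
  have hfd' : Differentiable ℝ (f.symm : E → E) := hf'.differentiable one_ne_zero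
  have hsurj : ∀ w, Function.Surjective (fderiv ℝ (f : E → E) w) :=
    fun w => fderiv_equiv_surjective f hfd hfd' w
  have hsurj' : ∀ w, Function.Surjective (fderiv ℝ (f.symm : E → E) w) := by
    intro w
    have := fderiv_equiv_surjective f.symm hfd' (by simpa using hfd) w
    exact this
  -- invariance of Ws and Wu under f and f.symm
  have hWsim : (f : E → E) '' (Ws f 1 p) ⊆ Ws f 1 p := by
    rintro _ ⟨x, hx, rfl⟩; exact (mem_Ws_apply_iff f p x).mpr hx
  have hWuim : (f : E → E) '' (Wu f 1 p) ⊆ Wu f 1 p := by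
    rintro _ ⟨x, hx, rfl⟩; exact (mem_Wu_apply_iff f p x).mpr hx
  have hWsim' : (f.symm : E → E) '' (Ws f 1 p) ⊆ Ws f 1 p := by
    rintro _ ⟨x, hx, rfl⟩
    have := (mem_Ws_apply_iff f p (f.symm x)).mp
    apply this
    rw [Equiv.apply_symm_apply]
    exact hx
  have hWuim' : (f.symm : E → E) '' (Wu f 1 p) ⊆ Wu f 1 p := by
    rintro _ ⟨x, hx, rfl⟩
    have := (mem_Wu_apply_iff f p (f.symm x)).mp
    apply this
    rw [Equiv.apply_symm_apply]
    exact hx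
  have hTim : (f : E → E) '' T ⊆ T :=
    transversePts_image_subset f hfd hsurj _ _ hWsim hWuim
  have hTim' : (f.symm : E → E) '' T ⊆ T :=
    transversePts_image_subset f.symm hfd' hsurj' _ _ hWsim' hWuim'
  have hHim : (f : E → E) '' H ⊆ H := by
    rw [hHdef]
    exact subset_trans (image_closure_subset_closure_image hf.continuous) (closure_mono hTim)
  have hHim' : (f.symm : E → E) '' H ⊆ H := by
    rw [hHdef]
    exact subset_trans (image_closure_subset_closure_image hf'.continuous) (closure_mono hTim')
  have hHit : ∀ (n : ℕ) (z : E), z ∈ H → (f : E → E)^[n] z ∈ H := by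
    intro n
    induction n with
    | zero => intro z hz; simpa using hz
    | succ k ih =>
      intro z hz
      rw [Function.iterate_succ_apply']
      exact hHim ⟨_, ih z hz, rfl⟩
  have hHit' : ∀ (n : ℕ) (z : E), z ∈ H → (f.symm : E → E)^[n] z ∈ H := by
    intro n
    induction n with
    | zero => intro z hz; simpa using hz
    | succ k ih =>
      intro z hz
      rw [Function.iterate_succ_apply']
      exact hHim' ⟨_, ih z hz, rfl⟩
  -- trap radii
  obtain ⟨rp, hrp, htrapP⟩ := hyp_to_trap f hf p hp
  obtain ⟨rq, hrq, htrapQ⟩ := hyp_to_trap f hf q hq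
  obtain ⟨rp', hrp', htrapP'⟩ := hyp_to_trap f.symm hf' p (hyp_symm f hf hf' p hp)
  obtain ⟨rq', hrq', htrapQ'⟩ := hyp_to_trap f.symm hf' q (hyp_symm f hf hf' q hq)
  have hqT : q ∈ closure T := by rw [← hHdef]; exact hqH
  -- the shadowing accuracy
  set ε := min (min rp rp') (min rq rq') / 2 with hε
  have hεpos : 0 < ε := by
    rw [hε]
    have h1 : 0 < min (min rp rp') (min rq rq') := by
      apply lt_min <;> [exact lt_min hrp hrp'; exact lt_min hrq hrq']
    linarith
  have hεrp : 2 * ε ≤ rp := by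
    rw [hε]
    have := min_le_left (min rp rp') (min rq rq')
    have := min_le_left rp rp'
    linarith
  have hεrp' : 2 * ε ≤ rp' := by
    rw [hε]
    have := min_le_left (min rp rp') (min rq rq')
    have := min_le_right rp rp'
    linarith
  have hεrq : 2 * ε ≤ rq := by
    rw [hε]
    have := min_le_right (min rp rp') (min rq rq')
    have := min_le_left rq rq'
    linarith
  have hεrq' : 2 * ε ≤ rq' := by
    rw [hε]
    have := min_le_right (min rp rp') (min rq rq')
    have := min_le_right rq rq'
    linarith
  obtain ⟨δ, hδ, hshad⟩ := hshadow ε hεpos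
  have hfq : f q = q := hq.1
  constructor
  · -- first goal : Ws p ∩ Wu q nonempty
    -- choose a transverse homoclinic point w with f w close to q
    have hnbh : {z : E | dist (f z) q < δ} ∈ nhds q := by
      apply IsOpen.mem_nhds
      · exact isOpen_lt ((hf.continuous).dist continuous_const) continuous_const
      · simp [hfq, hδ]
    obtain ⟨w, hw1, hw2⟩ := mem_closure_iff_nhds.mp hqT _ hnbh
    -- hw1 : w ∈ {z | dist (f z) q < δ}, hw2 : w ∈ T
    have hwH : w ∈ H := by rw [hHdef]; exact subset_closure hw2
    -- the pseudo-orbit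
    set xo : ℤ → E := fun i => if i ≤ 0 then q else (f : E → E)^[i.toNat] w with hxo
    have hmem : ∀ i, xo i ∈ H := by
      intro i
      rw [hxo]
      by_cases h : i ≤ 0
      · simpa [h] using hqH
      · simpa [h] using hHit i.toNat w hwH
    have hjump : ∀ i : ℤ, dist (f (xo i)) (xo (i + 1)) < δ := by
      intro i
      rcases lt_trichotomy i 0 with h | h | h
      · have h1 : i ≤ 0 := le_of_lt h
        have h2 : i + 1 ≤ 0 := by omega
        rw [hxo]
        simp only [if_pos h1, if_pos h2]
        simp [hfq, hδ]
      · subst h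
        rw [hxo]
        simp only [le_refl, if_pos]
        have h2 : ¬ ((0:ℤ) + 1 ≤ 0) := by omega
        rw [if_neg h2]
        have h3 : ((0:ℤ) + 1).toNat = 1 := by omega
        rw [h3, hfq]
        simpa [dist_comm] using hw1
      · have h1 : ¬ (i ≤ 0) := by omega
        have h2 : ¬ (i + 1 ≤ 0) := by omega
        rw [hxo]
        simp only [if_neg h1, if_neg h2]
        have h3 : (i + 1).toNat = i.toNat + 1 := by omega
        rw [h3, Function.iterate_succ_apply']
        simp [hδ]
    obtain ⟨y, hy⟩ := hshad xo hmem hjump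
    -- y is in Wu f 1 q
    have hyWu : y ∈ Wu f 1 q := by
      rw [mem_Wu_iff]
      apply htrapQ' y
      intro n
      have h1 := hy (-(n : ℤ))
      rw [perm_pow_neg_apply] at h1
      have h2 : xo (-(n : ℤ)) = q := by
        rw [hxo]; simp only [if_pos (by omega : -(n:ℤ) ≤ 0)]
      rw [h2] at h1
      linarith
    -- y is in Ws f 1 p
    have hwWs : w ∈ Ws f 1 p := hw2.1.1
    have hwten := (mem_Ws_iff f p w).mp hwWs
    obtain ⟨M0, hM0⟩ := Metric.tendsto_atTop.mp hwten (ε) hεpos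
    set M := max M0 1 with hM
    have hyWs : y ∈ Ws f 1 p := by
      apply Ws_of_shift f p y M
      apply htrapP
      intro n
      have hnM : n + M ≥ M0 := by omega
      have h1 := hy ((n + M : ℕ) : ℤ)
      rw [perm_pow_apply] at h1
      have h2 : xo ((n + M : ℕ) : ℤ) = (f : E → E)^[n + M] w := by
        rw [hxo]
        have hpos : ¬ (((n + M : ℕ) : ℤ) ≤ 0) := by omega
        have ht : (((n + M : ℕ) : ℤ)).toNat = n + M := by omega
        simp only [if_neg hpos, ht]
      rw [h2] at h1
      have h3 := hM0 (n + M) hnM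
      have h4 : dist ((f : E → E)^[n] ((f : E → E)^[M] y)) p ≤
          dist ((f : E → E)^[n + M] y) ((f : E → E)^[n + M] w) +
          dist ((f : E → E)^[n + M] w) p := by
        rw [← Function.iterate_add_apply]
        exact dist_triangle _ _ _
      linarith
    exact ⟨y, hyWs, hyWu⟩
  · -- second goal : Wu p ∩ Ws q nonempty
    obtain ⟨w, hw1, hw2⟩ := mem_closure_iff_nhds.mp hqT _ (Metric.ball_mem_nhds q hδ)
    -- hw1 : w ∈ ball q δ, hw2 : w ∈ T
    have hwd : dist w q < δ := Metric.mem_ball.mp hw1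
    have hwH : w ∈ H := by rw [hHdef]; exact subset_closure hw2
    set xo : ℤ → E := fun i => if 0 ≤ i then q else (f.symm : E → E)^[(-i).toNat] w with hxo
    have hmem : ∀ i, xo i ∈ H := by
      intro i
      rw [hxo]
      by_cases h : 0 ≤ i
      · simpa [h] using hqH
      · simpa [h] using hHit' (-i).toNat w hwH
    have hjump : ∀ i : ℤ, dist (f (xo i)) (xo (i + 1)) < δ := by
      intro i
      rcases lt_trichotomy i (-1) with h | h | h
      · have h1 : ¬ (0 ≤ i) := by omega
        have h2 : ¬ (0 ≤ i + 1) := by omega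
        rw [hxo]
        simp only [if_neg h1, if_neg h2]
        have h3 : (-i).toNat = (-(i+1)).toNat + 1 := by omega
        rw [h3, Function.iterate_succ_apply']
        simp [hδ]
      · subst h
        rw [hxo]
        have h1 : ¬ ((0:ℤ) ≤ -1) := by omega
        have h2 : (0:ℤ) ≤ -1 + 1 := by omega
        simp only [if_neg h1, if_pos h2]
        have h3 : (-(-1:ℤ)).toNat = 1 := by omega
        rw [h3]
        simpa using hwd
      · have h1 : (0:ℤ) ≤ i := by omega
        have h2 : (0:ℤ) ≤ i + 1 := by omega
        rw [hxo]
        simp only [if_pos h1, if_pos h2]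
        simp [hfq, hδ]
    obtain ⟨y, hy⟩ := hshad xo hmem hjump
    -- y ∈ Ws f 1 q
    have hyWs : y ∈ Ws f 1 q := by
      rw [mem_Ws_iff]
      apply htrapQ y
      intro n
      have h1 := hy ((n : ℕ) : ℤ)
      rw [perm_pow_apply] at h1
      have h2 : xo ((n : ℕ) : ℤ) = q := by
        rw [hxo]; simp only [if_pos (by omega : (0:ℤ) ≤ (n:ℕ))]
      rw [h2] at h1
      linarith
    -- y ∈ Wu f 1 p
    have hwWu : w ∈ Wu f 1 p := hw2.1.2
    have hwten := (mem_Wu_iff f p w).mp hwWu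
    obtain ⟨M0, hM0⟩ := Metric.tendsto_atTop.mp hwten ε hεpos
    set M := max M0 1 with hM
    have hyWu : y ∈ Wu f 1 p := by
      apply Wu_of_shift f p y M
      apply htrapP'
      intro n
      have hnM : n + M ≥ M0 := by omega
      have h1 := hy (-(((n + M : ℕ)) : ℤ))
      rw [perm_pow_neg_apply] at h1
      have h2 : xo (-(((n + M : ℕ)) : ℤ)) = (f.symm : E → E)^[n + M] w := by
        rw [hxo]
        have hneg : ¬ ((0:ℤ) ≤ -((n + M : ℕ) : ℤ)) := by omega
        have ht : ((-(-((n + M : ℕ) : ℤ))).toNat) = n + M := by omega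
        simp only [if_neg hneg, ht]
      rw [h2] at h1
      have h3 := hM0 (n + M) hnM
      have h4 : dist ((f.symm : E → E)^[n] ((f.symm : E → E)^[M] y)) p ≤
          dist ((f.symm : E → E)^[n + M] y) ((f.symm : E → E)^[n + M] w) +
          dist ((f.symm : E → E)^[n + M] w) p := by
        rw [← Function.iterate_add_apply]
        exact dist_triangle _ _ _
      linarith
    exact ⟨y, hyWu, hyWs⟩
end
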